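/- Let q ≠ -1, r₀ > 0, and f : [r₀,∞) → ℝ be C¹ with f(r₀)=0 and lim_{r→∞} r^{q+1} f(r)² = 0, and suppose ∫_{r₀}^∞ r^{q+2} (f')² dr < ∞. Then the equality 0 = (q+1) ∫_{r₀}^∞ r^q f² dr + 2 ∫_{r₀}^∞ r^{q+1} f f' dr holds, with both integrals absolutely convergent. -/

import Mathlib

open MeasureTheory Filter Set

private lemma two_mul_abs_le (u v ε : ℝ) (hε : 0 < ε) :
    2 * |u * v| ≤ ε * u ^ 2 + ε⁻¹ * v ^ 2 := by
  have h1 : 0 ≤ (ε * |u| - |v|) ^ 2 := sq_nonneg _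
  have h2 : |u * v| = |u| * |v| := abs_mul u v
  have h3 : |u| ^ 2 = u ^ 2 := sq_abs u
  have h4 : |v| ^ 2 = v ^ 2 := sq_abs v
  have hε' : 0 < ε⁻¹ := inv_pos.mpr hε
  have key : 2 * ε * |u * v| ≤ ε ^ 2 * u ^ 2 + v ^ 2 := by
    nlinarith [sq_nonneg (ε * |u| - |v|), abs_nonneg u, abs_nonneg v]
  have h5 : ε⁻¹ * (2 * ε * |u * v|) = 2 * |u * v| := by field_simp
  have h6 : ε⁻¹ * (ε ^ 2 * u ^ 2 + v ^ 2) = ε * u ^ 2 + ε⁻¹ * v ^ 2 := by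
    field_simp
  have h7 := mul_le_mul_of_nonneg_left key hε'.le
  rw [h5, h6] at h7
  exact h7

/-- The integration-by-parts identity underlying the weighted Hardy inequality:
`0 = (q+1) ∫ r^q f² + 2 ∫ r^{q+1} f f'`, with both integrals absolutely convergent. -/
theorem hardy_integration_by_parts (q r₀ : ℝ) (hq : q ≠ -1) (hr₀ : 0 < r₀)
    (f f' : ℝ → ℝ)
    (hderiv : ∀ r ∈ Set.Ici r₀, HasDerivAt f (f' r) r)
    (hcont : ContinuousOn f' (Set.Ici r₀))
    (hf0 : f r₀ = 0)
    (hlim : Tendsto (fun r : ℝ => r ^ (q + 1) * (f r) ^ 2) atTop (nhds 0))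
    (hfin : IntegrableOn (fun r : ℝ => r ^ (q + 2) * (f' r) ^ 2) (Set.Ioi r₀)) :
    IntegrableOn (fun r : ℝ => r ^ q * (f r) ^ 2) (Set.Ioi r₀) ∧
    IntegrableOn (fun r : ℝ => r ^ (q + 1) * f r * f' r) (Set.Ioi r₀) ∧
    0 = (q + 1) * (∫ r in Set.Ioi r₀, r ^ q * (f r) ^ 2) +
          2 * ∫ r in Set.Ioi r₀, r ^ (q + 1) * f r * f' r := by
  have hfc : ContinuousOn f (Set.Ici r₀) :=
    fun x hx => (hderiv x hx).continuousAt.continuousWithinAt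
  have hpos : ∀ x ∈ Set.Ici r₀, (0:ℝ) < x := fun x hx => lt_of_lt_of_le hr₀ hx
  -- continuity of power functions on Ici r₀
  have hrpow : ∀ p : ℝ, ContinuousOn (fun r : ℝ => r ^ p) (Set.Ici r₀) := by
    intro p
    exact ContinuousOn.rpow_const continuousOn_id
      (fun x hx => Or.inl (ne_of_gt (hpos x hx)))
  set G : ℝ → ℝ := fun r => (q + 1) * (r ^ q * f r ^ 2) + 2 * (r ^ (q + 1) * f r * f' r)
    with hG
  -- the antiderivative
  have hGderiv : ∀ r ∈ Set.Ici r₀, HasDerivAt (fun r => r ^ (q + 1) * f r ^ 2) (G r) r := by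
    intro r hr
    have hr0 : (0:ℝ) < r := hpos r hr
    have h1 : HasDerivAt (fun r : ℝ => r ^ (q + 1)) ((q + 1) * r ^ q) r := by
      have := Real.hasDerivAt_rpow_const (x := r) (p := q + 1) (Or.inl (ne_of_gt hr0))
      simpa [add_sub_cancel_right] using this
    have h2 : HasDerivAt (fun r => f r ^ 2) (2 * f r * f' r) r := by
      have := (hderiv r hr).fun_pow 2
      simpa [pow_one] using this
    have := h1.fun_mul h2
    refine this.congr_deriv ?_
    show _ = (q + 1) * (r ^ q * f r ^ 2) + 2 * (r ^ (q + 1) * f r * f' r); ring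
  -- continuity of the pieces
  have hcg1 : ContinuousOn (fun r : ℝ => r ^ q * f r ^ 2) (Set.Ici r₀) :=
    (hrpow q).mul (hfc.pow 2)
  have hcg2 : ContinuousOn (fun r : ℝ => r ^ (q + 1) * f r * f' r) (Set.Ici r₀) :=
    (((hrpow (q + 1)).mul hfc).mul hcont)
  have hcg3 : ContinuousOn (fun r : ℝ => r ^ (q + 2) * f' r ^ 2) (Set.Ici r₀) :=
    (hrpow (q + 2)).mul (hcont.pow 2)
  have hcG : ContinuousOn G (Set.Ici r₀) :=
    ((continuousOn_const.mul hcg1).add (continuousOn_const.mul hcg2))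
  -- interval integrability on [r₀, x]
  have hsub : ∀ x : ℝ, r₀ ≤ x → Set.uIcc r₀ x ⊆ Set.Ici r₀ := by
    intro x hx
    rw [Set.uIcc_of_le hx]
    exact fun y hy => hy.1
  have hIcc : ∀ x : ℝ, r₀ ≤ x → Set.Icc r₀ x ⊆ Set.Ici r₀ := fun x hx y hy => hy.1
  have hint1 : ∀ x : ℝ, r₀ ≤ x →
      IntervalIntegrable (fun r : ℝ => r ^ q * f r ^ 2) volume r₀ x := by
    intro x hx
    exact (hcg1.mono (hsub x hx)).intervalIntegrable
  have hint2 : ∀ x : ℝ, r₀ ≤ x →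
      IntervalIntegrable (fun r : ℝ => r ^ (q + 1) * f r * f' r) volume r₀ x := by
    intro x hx
    exact (hcg2.mono (hsub x hx)).intervalIntegrable
  have hintG : ∀ x : ℝ, r₀ ≤ x → IntervalIntegrable G volume r₀ x := by
    intro x hx
    exact (hcG.mono (hsub x hx)).intervalIntegrable
  -- FTC identity
  have key : ∀ x : ℝ, r₀ ≤ x → x ^ (q + 1) * f x ^ 2 = ∫ r in r₀..x, G r := by
    intro x hx
    have := intervalIntegral.integral_eq_sub_of_hasDerivAt
      (f := fun r => r ^ (q + 1) * f r ^ 2) (f' := G)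
      (fun y hy => hGderiv y (hsub x hx hy)) (hintG x hx)
    rw [this]
    simp [hf0]
  -- split the FTC identity
  have keysplit : ∀ x : ℝ, r₀ ≤ x →
      x ^ (q + 1) * f x ^ 2 =
        (q + 1) * (∫ r in r₀..x, r ^ q * f r ^ 2) +
        2 * ∫ r in r₀..x, r ^ (q + 1) * f r * f' r := by
    intro x hx
    rw [key x hx, hG]
    rw [intervalIntegral.integral_add ((hint1 x hx).const_mul _) ((hint2 x hx).const_mul _),
      intervalIntegral.integral_const_mul, intervalIntegral.integral_const_mul]
  -- B := the finite integral of r^{q+2} f'^2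
  set B : ℝ := ∫ r in Set.Ioi r₀, r ^ (q + 2) * f' r ^ 2 with hB
  have hBmono : ∀ x : ℝ, r₀ ≤ x → (∫ r in r₀..x, r ^ (q + 2) * f' r ^ 2) ≤ B := by
    intro x hx
    rw [intervalIntegral.integral_of_le hx]
    apply setIntegral_mono_set hfin
    · filter_upwards [ae_restrict_mem measurableSet_Ioi] with y hy
      have hy0 : (0:ℝ) < y := lt_trans hr₀ hy
      positivity
    · exact HasSubset.Subset.eventuallyLE Set.Ioc_subset_Ioi_self
  -- nonnegativity of A(x)
  have hAnn : ∀ x : ℝ, r₀ ≤ x → 0 ≤ ∫ r in r₀..x, r ^ q * f r ^ 2 := by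
    intro x hx
    apply intervalIntegral.integral_nonneg hx
    intro y hy
    have hy0 : (0:ℝ) < y := lt_of_lt_of_le hr₀ hy.1
    positivity
  -- pointwise Cauchy–Schwarz bound
  have hptwise : ∀ ε : ℝ, 0 < ε → ∀ y : ℝ, r₀ ≤ y →
      2 * |y ^ (q + 1) * f y * f' y| ≤
        ε * (y ^ q * f y ^ 2) + ε⁻¹ * (y ^ (q + 2) * f' y ^ 2) := by
    intro ε hε y hy
    have hy0 : (0:ℝ) < y := lt_of_lt_of_le hr₀ hy
    have hu := two_mul_abs_le (y ^ (q / 2) * f y) (y ^ ((q + 2) / 2) * f' y) ε hε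
    have e1 : (y ^ (q / 2)) * (y ^ ((q + 2) / 2)) = y ^ (q + 1) := by
      rw [← Real.rpow_add hy0]; congr 1; ring
    have e2 : (y ^ (q / 2)) ^ 2 = y ^ q := by
      rw [← Real.rpow_natCast (y ^ (q / 2)) 2, ← Real.rpow_mul hy0.le]
      congr 1; push_cast; ring
    have e3 : (y ^ ((q + 2) / 2)) ^ 2 = y ^ (q + 2) := by
      rw [← Real.rpow_natCast (y ^ ((q + 2) / 2)) 2, ← Real.rpow_mul hy0.le]
      congr 1; push_cast; ring
    calc 2 * |y ^ (q + 1) * f y * f' y|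
        = 2 * |(y ^ (q / 2) * f y) * (y ^ ((q + 2) / 2) * f' y)| := by
          rw [show (y ^ (q / 2) * f y) * (y ^ ((q + 2) / 2) * f' y)
            = (y ^ (q / 2) * y ^ ((q + 2) / 2)) * f y * f' y by ring, e1]
      _ ≤ ε * (y ^ (q / 2) * f y) ^ 2 + ε⁻¹ * (y ^ ((q + 2) / 2) * f' y) ^ 2 := hu
      _ = ε * (y ^ q * f y ^ 2) + ε⁻¹ * (y ^ (q + 2) * f' y ^ 2) := by
          rw [mul_pow, mul_pow, e2, e3]
  -- choose ε = |q+1|/2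
  have hq1 : (0:ℝ) < |q + 1| := by
    rw [abs_pos]
    intro h
    exact hq (by linarith)
  set ε : ℝ := |q + 1| / 2 with hε
  have hεpos : 0 < ε := by positivity
  -- the uniform bound on A(x), for large x
  set C : ℝ := (1 + ε⁻¹ * B) / ε with hC
  have hbound : ∀ x : ℝ, r₀ ≤ x → x ^ (q + 1) * f x ^ 2 ≤ 1 →
      (∫ r in r₀..x, r ^ q * f r ^ 2) ≤ C := by
    intro x hx hx1
    set A : ℝ := ∫ r in r₀..x, r ^ q * f r ^ 2 with hA
    have hAnn' : 0 ≤ A := hAnn x hx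
    -- |q+1| * A ≤ |x^{q+1} f x^2| + |2 ∫ ...|
    have hT : |2 * ∫ r in r₀..x, r ^ (q + 1) * f r * f' r| ≤ ε * A + ε⁻¹ * B := by
      rw [abs_mul, abs_two]
      have habs : |∫ r in r₀..x, r ^ (q + 1) * f r * f' r|
          ≤ ∫ r in r₀..x, |r ^ (q + 1) * f r * f' r| := by
        apply intervalIntegral.abs_integral_le_integral_abs hx
      have habsint : IntervalIntegrable (fun r : ℝ => |r ^ (q + 1) * f r * f' r|) volume r₀ x :=
        (hint2 x hx).abs
      have hmono2 : (∫ r in r₀..x, 2 * |r ^ (q + 1) * f r * f' r|)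
          ≤ ∫ r in r₀..x, ε * (r ^ q * f r ^ 2) + ε⁻¹ * (r ^ (q + 2) * f' r ^ 2) := by
        apply intervalIntegral.integral_mono_on hx (habsint.const_mul 2)
        · exact (((hint1 x hx).const_mul ε).add
            ((((hcg3.mono (hsub x hx)).intervalIntegrable)).const_mul ε⁻¹))
        · intro y hy
          exact hptwise ε hεpos y hy.1
      rw [intervalIntegral.integral_const_mul] at hmono2
      rw [intervalIntegral.integral_add ((hint1 x hx).const_mul ε)
        ((((hcg3.mono (hsub x hx)).intervalIntegrable)).const_mul ε⁻¹),
        intervalIntegral.integral_const_mul, intervalIntegral.integral_const_mul] at hmono2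
      have hBx := hBmono x hx
      have hεinv : (0:ℝ) ≤ ε⁻¹ := by positivity
      nlinarith [mul_le_mul_of_nonneg_left hBx hεinv]
    have hid := keysplit x hx
    have h1 : |q + 1| * A ≤ |x ^ (q + 1) * f x ^ 2| + (ε * A + ε⁻¹ * B) := by
      have : |(q + 1) * A| ≤ |x ^ (q + 1) * f x ^ 2|
          + |2 * ∫ r in r₀..x, r ^ (q + 1) * f r * f' r| := by
        rw [show (q + 1) * A = x ^ (q + 1) * f x ^ 2
          - 2 * ∫ r in r₀..x, r ^ (q + 1) * f r * f' r by rw [hid]; ring]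
        exact abs_sub _ _
      rw [abs_mul, abs_of_nonneg hAnn'] at this
      linarith [hT, this]
    have habs1 : |x ^ (q + 1) * f x ^ 2| ≤ 1 := by
      rw [abs_of_nonneg ?_]
      · exact hx1
      · have hx0 : (0:ℝ) < x := lt_of_lt_of_le hr₀ hx
        positivity
    -- |q+1| = 2ε, so (2ε - ε) A ≤ 1 + ε⁻¹ B
    have h2 : ε * A ≤ 1 + ε⁻¹ * B := by
      have : |q + 1| = 2 * ε := by rw [hε]; ring
      rw [this] at h1
      linarith
    rw [hC, le_div_iff₀ hεpos]
    have hcomm : A * ε = ε * A := mul_comm _ _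
    linarith
  -- integrability of r^q f^2
  have hintA : IntegrableOn (fun r : ℝ => r ^ q * (f r) ^ 2) (Set.Ioi r₀) := by
    apply integrableOn_Ioi_of_intervalIntegral_norm_bounded (l := atTop) (b := fun x : ℝ => max x r₀) C r₀
    · intro x
      exact (hint1 (max x r₀) (le_max_right x r₀)).1
    · exact tendsto_atTop_mono (fun x => le_max_left x r₀) tendsto_id
    · have hev : ∀ᶠ x : ℝ in atTop, x ^ (q + 1) * f x ^ 2 ≤ 1 := by
        have := hlim.eventually (eventually_le_nhds (show (0:ℝ) < 1 by norm_num))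
        exact this
      filter_upwards [hev, eventually_ge_atTop r₀] with x hx1 hxr
      have hmx : max x r₀ = x := max_eq_left hxr
      simp only [hmx]
      have : (∫ r in r₀..x, ‖r ^ q * f r ^ 2‖) = ∫ r in r₀..x, r ^ q * f r ^ 2 := by
        apply intervalIntegral.integral_congr
        intro y hy
        rw [Set.uIcc_of_le hxr] at hy
        have hy0 : (0:ℝ) < y := lt_of_lt_of_le hr₀ hy.1
        simp only [Real.norm_eq_abs]
        rw [abs_of_nonneg (by positivity : (0:ℝ) ≤ y ^ q * f y ^ 2)]
      rw [this]
      exact hbound x hxr hx1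
  -- integrability of r^{q+1} f f'
  have hintT : IntegrableOn (fun r : ℝ => r ^ (q + 1) * f r * f' r) (Set.Ioi r₀) := by
    apply Integrable.mono'
      ((hintA.const_mul (2⁻¹ : ℝ)).add (hfin.const_mul (2⁻¹ : ℝ)))
    · exact (hcg2.mono (Set.Ioi_subset_Ici_self)).aestronglyMeasurable measurableSet_Ioi
    · filter_upwards [ae_restrict_mem measurableSet_Ioi] with y hy
      have hy0 : r₀ ≤ y := le_of_lt hy
      have := hptwise 1 one_pos y hy0
      simp only [inv_one, one_mul] at this
      rw [Real.norm_eq_abs]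
      simp only [Pi.add_apply]
      linarith
  refine ⟨hintA, hintT, ?_⟩
  -- final identity by taking limits
  have hintG' : IntegrableOn G (Set.Ioi r₀) :=
    (hintA.const_mul (q + 1)).add (hintT.const_mul 2)
  have hlim1 : Tendsto (fun x : ℝ => ∫ r in r₀..x, G r) atTop
      (nhds (∫ r in Set.Ioi r₀, G r)) :=
    intervalIntegral_tendsto_integral_Ioi r₀ hintG' tendsto_id
  have hlim2 : Tendsto (fun x : ℝ => ∫ r in r₀..x, G r) atTop (nhds 0) := by
    apply Tendsto.congr' _ hlim
    filter_upwards [eventually_ge_atTop r₀] with x hx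
    exact key x hx
  have hGzero : (∫ r in Set.Ioi r₀, G r) = 0 := tendsto_nhds_unique hlim1 hlim2
  have hsplit : (∫ r in Set.Ioi r₀, G r) =
      (q + 1) * (∫ r in Set.Ioi r₀, r ^ q * (f r) ^ 2) +
      2 * ∫ r in Set.Ioi r₀, r ^ (q + 1) * f r * f' r := by
    rw [hG]
    rw [integral_add (hintA.const_mul (q + 1)) (hintT.const_mul 2),
      integral_const_mul, integral_const_mul]
  rw [← hGzero, hsplit]
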